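/- Let g : [0,1] → ℝ be continuously differentiable with g(0) = g(1) = 0. Then ‖g‖_{L²} ≤ ‖g‖_{L¹}^{2/3} ‖g'‖_{L²}^{1/3}, i.e. (∫₀¹ g(x)² dx)^{1/2} ≤ (∫₀¹ |g(x)| dx)^{2/3} · (∫₀¹ g'(x)² dx)^{1/6}. -/

import Mathlib

open Set Real

/-- Interpolation inequality: for a `C¹` function `g` on `[0,1]` with `g(0) = g(1) = 0`
one has `‖g‖_{L²} ≤ ‖g‖_{L¹}^{2/3} ‖g'‖_{L²}^{1/3}`. -/
theorem L2_le_L1_rpow_mul_L2_deriv_rpow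
    (g g' : ℝ → ℝ)
    (hg : ∀ x ∈ Icc (0:ℝ) 1, HasDerivAt g (g' x) x)
    (hg' : ContinuousOn g' (Icc 0 1))
    (h0 : g 0 = 0) (h1 : g 1 = 0) :
    Real.sqrt (∫ x in (0:ℝ)..1, (g x) ^ 2)
      ≤ (∫ x in (0:ℝ)..1, |g x|) ^ ((2:ℝ)/3) *
        (∫ x in (0:ℝ)..1, (g' x) ^ 2) ^ ((1:ℝ)/6) := by
  have hgc : ContinuousOn g (Icc 0 1) := fun x hx => (hg x hx).continuousAt.continuousWithinAt
  set A := ∫ x in (0:ℝ)..1, |g x| with hAdef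
  set B := ∫ x in (0:ℝ)..1, (g x) ^ 2 with hBdef
  set C := ∫ x in (0:ℝ)..1, (g' x) ^ 2 with hCdef
  set S := ∫ x in (0:ℝ)..1, |g x * g' x| with hSdef
  have h01 : (0:ℝ) ∈ Icc (0:ℝ) 1 := by norm_num
  have h11 : (1:ℝ) ∈ Icc (0:ℝ) 1 := by norm_num
  have key : ∀ f : ℝ → ℝ, ContinuousOn f (Icc 0 1) →
      ∀ u ∈ Icc (0:ℝ) 1, ∀ v ∈ Icc (0:ℝ) 1, IntervalIntegrable f MeasureTheory.volume u v :=
    fun f hf u hu v hv => (hf.mono (uIcc_subset_Icc hu hv)).intervalIntegrable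
  have hcontgg : ContinuousOn (fun t => 2 * g t * g' t) (Icc 0 1) :=
    (continuousOn_const.mul hgc).mul hg'
  have hcontabs : ContinuousOn (fun t => |2 * g t * g' t|) (Icc 0 1) := hcontgg.abs
  have hcontabsgg : ContinuousOn (fun t => |g t * g' t|) (Icc 0 1) := (hgc.mul hg').abs
  have hA0 : 0 ≤ A := intervalIntegral.integral_nonneg (by norm_num) (fun x _ => abs_nonneg _)
  have hB0 : 0 ≤ B := intervalIntegral.integral_nonneg (by norm_num) (fun x _ => sq_nonneg _)
  have hC0 : 0 ≤ C := intervalIntegral.integral_nonneg (by norm_num) (fun x _ => sq_nonneg _)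
  have hS0 : 0 ≤ S := intervalIntegral.integral_nonneg (by norm_num) (fun x _ => abs_nonneg _)
  rcases eq_or_lt_of_le hB0 with hBz | hBpos
  · rw [← hBz, Real.sqrt_zero]
    exact mul_nonneg (Real.rpow_nonneg hA0 _) (Real.rpow_nonneg hC0 _)
  have hderiv : ∀ x ∈ Icc (0:ℝ) 1, HasDerivAt (fun t => g t ^ 2) (2 * g x * g' x) x := by
    intro x hx
    have h : HasDerivAt (fun t => g t ^ 2) (((2:ℕ):ℝ) * g x ^ (2 - 1) * g' x) x := (hg x hx).pow 2
    convert h using 1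
    push_cast
    ring
  -- FTC on [0,x] and [x,1]
  have hFTC1 : ∀ x ∈ Icc (0:ℝ) 1, (∫ t in (0:ℝ)..x, 2 * g t * g' t) = g x ^ 2 := by
    intro x hx
    have h := intervalIntegral.integral_eq_sub_of_hasDerivAt
      (fun t ht => hderiv t (uIcc_subset_Icc h01 hx ht)) (key _ hcontgg 0 h01 x hx)
    rw [h, h0]; ring
  have hFTC2 : ∀ x ∈ Icc (0:ℝ) 1, (∫ t in x..(1:ℝ), 2 * g t * g' t) = - g x ^ 2 := by
    intro x hx
    have h := intervalIntegral.integral_eq_sub_of_hasDerivAt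
      (fun t ht => hderiv t (uIcc_subset_Icc hx h11 ht)) (key _ hcontgg x hx 1 h11)
    rw [h, h1]; ring
  -- sup bound: g x ^ 2 ≤ S
  have hsup : ∀ x ∈ Icc (0:ℝ) 1, g x ^ 2 ≤ S := by
    intro x hx
    have b1 : (∫ t in (0:ℝ)..x, 2 * g t * g' t) ≤ ∫ t in (0:ℝ)..x, |2 * g t * g' t| := by
      calc (∫ t in (0:ℝ)..x, 2 * g t * g' t) ≤ |∫ t in (0:ℝ)..x, 2 * g t * g' t| := le_abs_self _
        _ ≤ _ := intervalIntegral.abs_integral_le_integral_abs hx.1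
    have b2 : -(∫ t in x..(1:ℝ), 2 * g t * g' t) ≤ ∫ t in x..(1:ℝ), |2 * g t * g' t| := by
      calc -(∫ t in x..(1:ℝ), 2 * g t * g' t) ≤ |∫ t in x..(1:ℝ), 2 * g t * g' t| := neg_le_abs _
        _ ≤ _ := intervalIntegral.abs_integral_le_integral_abs hx.2
    have badd : (∫ t in (0:ℝ)..x, |2 * g t * g' t|) + ∫ t in x..(1:ℝ), |2 * g t * g' t|
        = ∫ t in (0:ℝ)..1, |2 * g t * g' t| :=
      intervalIntegral.integral_add_adjacent_intervals
        (key _ hcontabs 0 h01 x hx) (key _ hcontabs x hx 1 h11)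
    have habs : (∫ t in (0:ℝ)..1, |2 * g t * g' t|) = 2 * S := by
      rw [hSdef, ← intervalIntegral.integral_const_mul]
      congr 1
      funext t
      rw [mul_assoc, abs_mul]
      norm_num
    have e1 := hFTC1 x hx
    have e2 := hFTC2 x hx
    linarith
  -- B ≤ A * sqrt S
  have hBle : B ≤ A * Real.sqrt S := by
    have hpt : ∀ x ∈ Icc (0:ℝ) 1, g x ^ 2 ≤ |g x| * Real.sqrt S := by
      intro x hx
      have h1 : |g x| ≤ Real.sqrt S := by
        rw [← Real.sqrt_sq_eq_abs]
        exact Real.sqrt_le_sqrt (hsup x hx)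
      calc g x ^ 2 = |g x| * |g x| := by rw [← sq_abs]; ring
        _ ≤ |g x| * Real.sqrt S := mul_le_mul_of_nonneg_left h1 (abs_nonneg _)
    calc B ≤ ∫ x in (0:ℝ)..1, |g x| * Real.sqrt S := by
          refine intervalIntegral.integral_mono_on (by norm_num)
            (key _ (hgc.pow 2) 0 h01 1 h11)
            ((key _ hgc.abs 0 h01 1 h11).mul_const _) hpt
      _ = A * Real.sqrt S := by rw [intervalIntegral.integral_mul_const]
  -- Cauchy-Schwarz: S ≤ sqrt B * sqrt C
  have heps : ∀ ε : ℝ, 0 < ε → S ≤ (ε * B + C / ε) / 2 := by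
    intro ε hε
    have hpt : ∀ x ∈ Icc (0:ℝ) 1, |g x * g' x| ≤ (ε * g x ^ 2 + g' x ^ 2 / ε) / 2 := by
      intro x hx
      have hs : Real.sqrt ε ^ 2 = ε := Real.sq_sqrt hε.le
      have hsp : 0 < Real.sqrt ε := Real.sqrt_pos.mpr hε
      have hd : g' x ^ 2 / ε * ε = g' x ^ 2 := div_mul_cancel₀ _ hε.ne'
      rw [le_div_iff₀ (by norm_num : (0:ℝ) < 2)]
      have h3 : 2 * ε * |g x * g' x| ≤ ε ^ 2 * g x ^ 2 + g' x ^ 2 := by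
        rcases abs_cases (g x * g' x) with ⟨he, _⟩ | ⟨he, _⟩ <;> rw [he] <;>
          nlinarith [sq_nonneg (ε * g x - g' x), sq_nonneg (ε * g x + g' x)]
      have h2 : (|g x * g' x| * 2) * ε ≤ (ε * g x ^ 2 + g' x ^ 2 / ε) * ε := by
        rw [add_mul, div_mul_cancel₀ _ hε.ne']
        nlinarith [h3]
      exact le_of_mul_le_mul_right h2 hε
    have hint1 : IntervalIntegrable (fun x => (ε * g x ^ 2 + g' x ^ 2 / ε) / 2)
        MeasureTheory.volume 0 1 :=
      key _ (((continuousOn_const.mul (hgc.pow 2)).add ((hg'.pow 2).div_const ε)).div_const 2)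
        0 h01 1 h11
    calc S ≤ ∫ x in (0:ℝ)..1, (ε * g x ^ 2 + g' x ^ 2 / ε) / 2 :=
          intervalIntegral.integral_mono_on (by norm_num)
            (key _ hcontabsgg 0 h01 1 h11) hint1 hpt
      _ = (ε * B + C / ε) / 2 := by
          rw [hBdef, hCdef]
          rw [show (fun x => (ε * g x ^ 2 + g' x ^ 2 / ε) / 2)
              = (fun x => (ε * g x ^ 2 + g' x ^ 2 / ε) / 2) from rfl]
          rw [intervalIntegral.integral_div, intervalIntegral.integral_add
              ((key (fun x => g x ^ 2) (hgc.pow 2) 0 h01 1 h11).const_mul ε)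
              ((key (fun x => g' x ^ 2) (hg'.pow 2) 0 h01 1 h11).div_const ε),
            intervalIntegral.integral_const_mul, intervalIntegral.integral_div]
  have hCS : S ≤ Real.sqrt B * Real.sqrt C := by
    rcases eq_or_lt_of_le hC0 with hCz | hCpos
    · have hS0' : S ≤ 0 := by
        by_contra h
        push_neg at h
        have := heps (S / B) (div_pos h hBpos)
        rw [← hCz] at this
        rw [div_mul_cancel₀ _ hBpos.ne'] at this
        simp at this
        linarith
      rw [← hCz, Real.sqrt_zero, mul_zero]
      exact hS0'
    · set sb := Real.sqrt B with hsbdef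
      set sc := Real.sqrt C with hscdef
      have hsb : sb ^ 2 = B := Real.sq_sqrt hB0
      have hsc : sc ^ 2 = C := Real.sq_sqrt hC0
      have hsbp : 0 < sb := Real.sqrt_pos.mpr hBpos
      have hscp : 0 < sc := Real.sqrt_pos.mpr hCpos
      have h := heps (sc / sb) (div_pos hscp hsbp)
      have e1 : sc / sb * B = sb * sc := by rw [← hsb]; field_simp
      have e2 : C / (sc / sb) = sb * sc := by rw [← hsc]; field_simp
      rw [e1, e2] at h
      linarith
  -- combine
  set sb := Real.sqrt B with hsbdef
  set sc := Real.sqrt C with hscdef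
  have hsb : sb ^ 2 = B := Real.sq_sqrt hB0
  have hsbp : 0 < sb := Real.sqrt_pos.mpr hBpos
  have hsc0 : 0 ≤ sc := Real.sqrt_nonneg C
  have h5 : B ≤ A * Real.sqrt (sb * sc) :=
    hBle.trans (mul_le_mul_of_nonneg_left (Real.sqrt_le_sqrt hCS) hA0)
  have hw : Real.sqrt (sb * sc) ^ 2 = sb * sc := Real.sq_sqrt (by positivity)
  have h6 : sb ^ 3 ≤ A ^ 2 * sc := by
    have h8 : B * B ≤ (A * Real.sqrt (sb * sc)) * (A * Real.sqrt (sb * sc)) :=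
      mul_self_le_mul_self hB0 h5
    nlinarith [Real.sqrt_nonneg (sb * sc), hsbp, sq_nonneg A]
  have h10 : sb ≤ (A ^ 2 * sc) ^ ((1:ℝ)/3) := by
    have h11' := Real.rpow_le_rpow (by positivity) h6 (by norm_num : (0:ℝ) ≤ 1/3)
    calc sb = (sb ^ 3) ^ ((1:ℝ)/3) := by
          rw [← Real.rpow_natCast sb 3, ← Real.rpow_mul hsbp.le]
          norm_num
      _ ≤ _ := h11'
  calc sb ≤ (A ^ 2 * sc) ^ ((1:ℝ)/3) := h10
    _ = A ^ ((2:ℝ)/3) * C ^ ((1:ℝ)/6) := by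
        rw [Real.mul_rpow (by positivity) hsc0, ← Real.rpow_natCast A 2,
          ← Real.rpow_mul hA0, hscdef, Real.sqrt_eq_rpow, ← Real.rpow_mul hC0]
        norm_num
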